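/- Let G be a connected graph and H a connected spanning subgraph obtained by deleting a single edge. Then K(H) - 1/θ_{n-1} + 1/μ_1 ≤ K(G) ≤ K(H) - 1/θ_1 + 1/μ_{n-1}, where μ_1 ≥ ... ≥ μ_{n-1} > μ_n = 0 are the normalized Laplacian eigenvalues of G and θ_1 ≥ ... ≥ θ_{n-1} > θ_n = 0 those of H. -/

import Mathlib

open Finset

/-- Corollary 5.10: let `G` be a connected graph and `H` a connected spanning subgraph
obtained by deleting a single edge. With normalized Laplacian eigenvalues
`μ₁ ≥ ... ≥ μ_{n-1} > μₙ = 0` of `G` and `θ₁ ≥ ... ≥ θ_{n-1} > θₙ = 0` of `H`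
(convention `μ₀ = 2`, `μᵢ = 0` for `i ≥ n+1`) and edge interlacing `μ_{i-1} ≥ θᵢ ≥ μ_{i+1}`,
one has `K(H) - 1/θ_{n-1} + 1/μ₁ ≤ K(G) ≤ K(H) - 1/θ₁ + 1/μ_{n-1}`, where `K` is the sum
of reciprocals of the nonzero normalized Laplacian eigenvalues. -/
theorem kemeny_one_edge_deletion_bounds (n : ℕ) (hn : 2 ≤ n)
    (μ θ : ℕ → ℝ)
    (hμconv0 : μ 0 = 2) (hθconv0 : θ 0 = 2)
    (hμconvhigh : ∀ i, n + 1 ≤ i → μ i = 0) (hθconvhigh : ∀ i, n + 1 ≤ i → θ i = 0)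
    (hμn : μ n = 0) (hθn : θ n = 0)
    (hμsort : ∀ i j, 1 ≤ i → i ≤ j → j ≤ n → μ j ≤ μ i)
    (hθsort : ∀ i j, 1 ≤ i → i ≤ j → j ≤ n → θ j ≤ θ i)
    (hμpos : ∀ i, 1 ≤ i → i ≤ n - 1 → 0 < μ i)
    (hθpos : ∀ i, 1 ≤ i → i ≤ n - 1 → 0 < θ i)
    (hμle2 : ∀ i, μ i ≤ 2) (hθle2 : ∀ i, θ i ≤ 2)
    (hinter : ∀ i, 1 ≤ i → i ≤ n → θ i ≤ μ (i - 1) ∧ μ (i + 1) ≤ θ i)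
    (KG KH : ℝ)
    (hKG : KG = ∑ i ∈ Finset.Icc 1 (n - 1), (μ i)⁻¹)
    (hKH : KH = ∑ j ∈ Finset.Icc 1 (n - 1), (θ j)⁻¹) :
    KH - (θ (n - 1))⁻¹ + (μ 1)⁻¹ ≤ KG ∧ KG ≤ KH - (θ 1)⁻¹ + (μ (n - 1))⁻¹ := by
  obtain ⟨m, rfl⟩ : ∃ m, n = m + 2 := ⟨n - 2, by omega⟩
  have hn1 : m + 2 - 1 = m + 1 := by omega
  rw [hn1] at hKG hKH ⊢
  have hKG' : KG = ∑ k ∈ Finset.range (m + 1), (μ (1 + k))⁻¹ := by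
    rw [hKG, ← Finset.Ico_add_one_right_eq_Icc, Finset.sum_Ico_eq_sum_range, Nat.add_sub_cancel]
  have hKH' : KH = ∑ k ∈ Finset.range (m + 1), (θ (1 + k))⁻¹ := by
    rw [hKH, ← Finset.Ico_add_one_right_eq_Icc, Finset.sum_Ico_eq_sum_range, Nat.add_sub_cancel]
  constructor
  · rw [hKG', hKH', Finset.sum_range_succ, Finset.sum_range_succ']
    have h1 : ∀ k ∈ Finset.range m, (θ (1 + k))⁻¹ ≤ (μ (1 + (k + 1)))⁻¹ := by
      intro k hk
      rw [Finset.mem_range] at hk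
      have hpos : 0 < μ (1 + (k + 1)) := hμpos _ (by omega) (by omega)
      have hle : μ (1 + (k + 1)) ≤ θ (1 + k) := by
        have := (hinter (k + 1) (by omega) (by omega)).2
        convert this using 2 <;> omega
      exact inv_anti₀ hpos hle
    have := Finset.sum_le_sum h1
    have h2 : (1:ℕ) + m = m + 1 := by omega
    rw [h2]
    have h3 : (1:ℕ) + 0 = 1 := by omega
    rw [h3]
    linarith
  · rw [hKG', hKH', Finset.sum_range_succ, Finset.sum_range_succ']
    have h1 : ∀ k ∈ Finset.range m, (μ (1 + k))⁻¹ ≤ (θ (1 + (k + 1)))⁻¹ := by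
      intro k hk
      rw [Finset.mem_range] at hk
      have hpos : 0 < θ (1 + (k + 1)) := hθpos _ (by omega) (by omega)
      have hle : θ (1 + (k + 1)) ≤ μ (1 + k) := by
        have := (hinter (k + 2) (by omega) (by omega)).1
        convert this using 2 <;> omega
      exact inv_anti₀ hpos hle
    have := Finset.sum_le_sum h1
    have h2 : (1:ℕ) + m = m + 1 := by omega
    rw [h2]
    have h3 : (1:ℕ) + 0 = 1 := by omega
    rw [h3]
    linarith
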